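/- arXiv:2408.15730 — 3 statements merged into one kernel-verified Lean document; each statement's English description precedes it below -/
import Mathlib

section
/- Let S ⊂ ℝ² be the unit circle. Let A and B be finite sets of chords of S such that: any two distinct chords of A are disjoint (as subsets of the plane), any two distinct chords of B are disjoint, and the set of all endpoints of chords of A equals the set of all endpoints of chords of B. Then either A = B, or there exist chords a₁, a₂ ∈ A and b₁, b₂ ∈ B and points p₁, p₂ ∈ S such that: a₁ and b₁ share the endpoint p₁ and have distinct other endpoints q(a₁) ≠ q(b₁) with det(q(b₁) − p₁, q(a₁) − p₁) > 0 (i.e., b₁ is to the right of a₁ at p₁), and a₂ and b₂ share the endpoint p₂ and have distinct other endpoints q(a₂) ≠ q(b₂) with det(q(b₂) − p₂, q(a₂) − p₂) < 0 (i.e., b₂ is to the left of a₂ at p₂). -/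
/-- The standard determinant of two plane vectors. -/
def det2 (u v : ℝ × ℝ) : ℝ := u.1 * v.2 - u.2 * v.1

/-- The closed straight segment spanned by an unordered pair of points. -/
def chordSeg : Sym2 (ℝ × ℝ) → Set (ℝ × ℝ) :=
  Sym2.lift ⟨fun p q => segment ℝ p q, fun p q => segment_symm ℝ p q⟩

/-- The unit circle in the plane. -/
def unitCircle : Set (ℝ × ℝ) := {p : ℝ × ℝ | p.1 ^ 2 + p.2 ^ 2 = 1}

noncomputable def toC (p : ℝ × ℝ) : ℂ := ⟨p.1, p.2⟩

lemma abs_toC {p : ℝ × ℝ} (h : p ∈ unitCircle) : ‖toC p‖ = 1 := by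
  have : Complex.normSq (toC p) = 1 := by
    simp only [Complex.normSq_mk, toC]
    have := h
    simp only [unitCircle, Set.mem_setOf_eq] at this
    nlinarith
  rw [Complex.norm_def, this, Real.sqrt_one]

lemma toC_inj {p q : ℝ × ℝ} (h : toC p = toC q) : p = q := by
  have h1 := congrArg Complex.re h
  have h2 := congrArg Complex.im h
  simp [toC] at h1 h2
  exact Prod.ext h1 h2

lemma toC_ne_zero {p : ℝ × ℝ} (h : p ∈ unitCircle) : toC p ≠ 0 := by
  intro h0
  have := abs_toC h
  rw [h0] at this
  simp at this

lemma det2_eq_im {p q r : ℝ × ℝ} :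
    det2 (q - p) (r - p) =
      ((starRingEnd ℂ) (toC q - toC p) * (toC r - toC p)).im := by
  simp [det2, toC, Complex.mul_im, Complex.sub_re, Complex.sub_im]
  ring

noncomputable def fAng (p q : ℝ × ℝ) : ℝ :=
  if 0 < (toC q / toC p).arg then (toC q / toC p).arg else (toC q / toC p).arg + 2 * Real.pi

lemma divC_ne_one {p q : ℝ × ℝ} (hp : p ∈ unitCircle) (hpq : p ≠ q) :
    toC q / toC p ≠ 1 := by
  intro h
  have : toC q = toC p := by
    rw [div_eq_iff (toC_ne_zero hp), one_mul] at h
    exact h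
  exact hpq (toC_inj this).symm

lemma abs_div_one {p q : ℝ × ℝ} (hp : p ∈ unitCircle) (hq : q ∈ unitCircle) :
    ‖toC q / toC p‖ = 1 := by
  rw [norm_div, abs_toC hp, abs_toC hq, div_one]

lemma arg_ne_zero {p q : ℝ × ℝ} (hp : p ∈ unitCircle) (hq : q ∈ unitCircle) (hpq : p ≠ q) :
    (toC q / toC p).arg ≠ 0 := by
  intro h
  rw [Complex.arg_eq_zero_iff] at h
  apply divC_ne_one hp hpq
  have habs := abs_div_one hp hq
  set z := toC q / toC p with hz
  have : z.re = 1 := by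
    have : z.re ^ 2 + z.im ^ 2 = 1 := by
      have := Complex.sq_norm z
      rw [habs] at this
      simp [Complex.normSq_apply] at this
      nlinarith
    rw [h.2] at this
    nlinarith [h.1]
  exact Complex.ext this h.2

lemma fAng_mem {p q : ℝ × ℝ} (hp : p ∈ unitCircle) (hq : q ∈ unitCircle) (hpq : p ≠ q) :
    fAng p q ∈ Set.Ioo 0 (2 * Real.pi) := by
  have hπ := Real.pi_pos
  have h1 := Complex.arg_le_pi (toC q / toC p)
  have h2 := Complex.neg_pi_lt_arg (toC q / toC p)
  have h0 := arg_ne_zero hp hq hpq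
  unfold fAng
  split_ifs with h
  · constructor <;> nlinarith
  · push_neg at h
    constructor <;> nlinarith [lt_of_le_of_ne h h0]

lemma cos_fAng {p q : ℝ × ℝ} (hp : p ∈ unitCircle) (hq : q ∈ unitCircle) :
    Real.cos (fAng p q) = (toC q / toC p).re ∧
      Real.sin (fAng p q) = (toC q / toC p).im := by
  have hz : toC q / toC p ≠ 0 := div_ne_zero (toC_ne_zero hq) (toC_ne_zero hp)
  have habs : ‖toC q / toC p‖ = 1 := abs_div_one hp hq
  have hc := Complex.cos_arg hz
  have hs := Complex.sin_arg (toC q / toC p)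
  rw [habs, div_one] at hc hs
  unfold fAng
  split_ifs with h
  · exact ⟨hc, hs⟩
  · rw [Real.cos_add_two_pi, Real.sin_add_two_pi]
    exact ⟨hc, hs⟩

lemma fAng_inj {p q r : ℝ × ℝ} (hp : p ∈ unitCircle) (hq : q ∈ unitCircle)
    (hr : r ∈ unitCircle) (h : fAng p q = fAng p r) : q = r := by
  obtain ⟨hc1, hs1⟩ := cos_fAng hp hq
  obtain ⟨hc2, hs2⟩ := cos_fAng hp hr
  rw [h] at hc1 hs1
  have : toC q / toC p = toC r / toC p :=
    Complex.ext (hc1.symm.trans hc2) (hs1.symm.trans hs2)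
  have : toC q = toC r := by
    have hp0 := toC_ne_zero hp
    rw [div_eq_div_iff hp0 hp0] at this
    exact mul_right_cancel₀ hp0 this
  exact toC_inj this

lemma fAng_add_symm {p q : ℝ × ℝ} (hp : p ∈ unitCircle) (hq : q ∈ unitCircle) (hpq : p ≠ q) :
    fAng p q + fAng q p = 2 * Real.pi := by
  have hπ := Real.pi_pos
  have hinv : toC p / toC q = (toC q / toC p)⁻¹ := by
    rw [inv_div]
  have harg : (toC p / toC q).arg =
      if (toC q / toC p).arg = Real.pi then Real.pi else -(toC q / toC p).arg := by
    rw [hinv, Complex.arg_inv]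
  have h1 := Complex.arg_le_pi (toC q / toC p)
  have h2 := Complex.neg_pi_lt_arg (toC q / toC p)
  have h0 := arg_ne_zero hp hq hpq
  unfold fAng
  rw [harg]
  split_ifs with ha hb hc hd <;> (try push_neg at *) <;>
    first
      | linarith
      | nlinarith [lt_of_le_of_ne (by assumption : (toC q / toC p).arg ≤ 0) h0]

lemma trig_identity (x y : ℝ) :
    (Real.cos (2*x) - 1) * Real.sin (2*y) - Real.sin (2*x) * (Real.cos (2*y) - 1) =
      4 * Real.sin x * Real.sin y * Real.sin (y - x) := by
  rw [Real.sin_two_mul, Real.sin_two_mul, Real.cos_two_mul, Real.cos_two_mul, Real.sin_sub]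
  linear_combination (4 * Real.sin y * Real.cos y) * Real.sin_sq_add_cos_sq x -
    (4 * Real.sin x * Real.cos x) * Real.sin_sq_add_cos_sq y

lemma det_key {p q r : ℝ × ℝ} (hp : p ∈ unitCircle) (hq : q ∈ unitCircle)
    (hr : r ∈ unitCircle) :
    det2 (q - p) (r - p) =
      4 * Real.sin (fAng p q / 2) * Real.sin (fAng p r / 2) *
        Real.sin ((fAng p r - fAng p q) / 2) := by
  obtain ⟨hc1, hs1⟩ := cos_fAng hp hq
  obtain ⟨hc2, hs2⟩ := cos_fAng hp hr
  set α := fAng p q with hα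
  set β := fAng p r with hβ
  have hp0 := toC_ne_zero hp
  have hnorm : (starRingEnd ℂ) (toC p) * toC p = 1 := by
    rw [mul_comm, Complex.mul_conj]
    norm_cast
    rw [Complex.normSq_eq_norm_sq, abs_toC hp]
    norm_num
  have hzq : toC q - toC p = toC p * (toC q / toC p - 1) := by
    field_simp
  have hzr : toC r - toC p = toC p * (toC r / toC p - 1) := by
    field_simp
  rw [det2_eq_im, hzq, hzr, map_mul, mul_mul_mul_comm, hnorm, one_mul]
  set z := toC q / toC p
  set w := toC r / toC p
  have him : ((starRingEnd ℂ) (z - 1) * (w - 1)).im =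
      (z.re - 1) * w.im - z.im * (w.re - 1) := by
    simp [Complex.mul_im, Complex.sub_re, Complex.sub_im]
    ring
  rw [him, ← hc1, ← hs1, ← hc2, ← hs2]
  have := trig_identity (α/2) (β/2)
  have e1 : 2 * (α/2) = α := by ring
  have e2 : 2 * (β/2) = β := by ring
  have e3 : β/2 - α/2 = (β - α)/2 := by ring
  rw [e1, e2, e3] at this
  exact this

lemma sin_pos_iff' {t : ℝ} (h1 : -Real.pi < t) (h2 : t < Real.pi) :
    (0 < Real.sin t ↔ 0 < t) := by
  constructor
  · intro h
    by_contra hle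
    push_neg at hle
    have := Real.sin_nonpos_of_nonpos_of_neg_pi_le hle (le_of_lt h1)
    linarith
  · intro h
    exact Real.sin_pos_of_pos_of_lt_pi h h2

lemma det_pos_iff {p q r : ℝ × ℝ} (hp : p ∈ unitCircle) (hq : q ∈ unitCircle)
    (hr : r ∈ unitCircle) (hpq : p ≠ q) (hpr : p ≠ r) :
    (0 < det2 (q - p) (r - p) ↔ fAng p q < fAng p r) := by
  have hπ := Real.pi_pos
  obtain ⟨ha1, ha2⟩ := fAng_mem hp hq hpq
  obtain ⟨hb1, hb2⟩ := fAng_mem hp hr hpr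
  rw [det_key hp hq hr]
  have s1 : 0 < Real.sin (fAng p q / 2) :=
    Real.sin_pos_of_pos_of_lt_pi (by linarith) (by linarith)
  have s2 : 0 < Real.sin (fAng p r / 2) :=
    Real.sin_pos_of_pos_of_lt_pi (by linarith) (by linarith)
  have hδ := sin_pos_iff' (t := (fAng p r - fAng p q)/2) (by linarith) (by linarith)
  constructor
  · intro h
    have : 0 < Real.sin ((fAng p r - fAng p q)/2) := by
      by_contra hle
      push_neg at hle
      have hns : 4 * Real.sin (fAng p q / 2) * Real.sin (fAng p r / 2) *
          Real.sin ((fAng p r - fAng p q)/2) ≤ 0 :=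
        mul_nonpos_of_nonneg_of_nonpos (by positivity) hle
      linarith
    have := hδ.mp this
    linarith
  · intro h
    have : 0 < Real.sin ((fAng p r - fAng p q)/2) := hδ.mpr (by linarith)
    positivity

lemma det_neg_iff {p q r : ℝ × ℝ} (hp : p ∈ unitCircle) (hq : q ∈ unitCircle)
    (hr : r ∈ unitCircle) (hpq : p ≠ q) (hpr : p ≠ r) :
    (det2 (q - p) (r - p) < 0 ↔ fAng p r < fAng p q) := by
  have h1 := det_pos_iff hp hr hq hpr hpq
  have h2 := det_pos_iff hp hq hr hpq hpr
  have hanti : det2 (q - p) (r - p) = -det2 (r - p) (q - p) := by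
    simp [det2]; ring
  rw [hanti]
  constructor
  · intro h
    exact h1.mp (by linarith)
  · intro h
    have := h1.mpr h
    linarith

lemma chordSeg_mk (p q : ℝ × ℝ) : chordSeg s(p, q) = segment ℝ p q := rfl

open Classical in
noncomputable def partner (C : Finset (Sym2 (ℝ × ℝ))) (p : ℝ × ℝ) : ℝ × ℝ :=
  if h : ∃ c ∈ C, p ∈ c then Sym2.Mem.other h.choose_spec.2 else p

lemma partner_chord {C : Finset (Sym2 (ℝ × ℝ))} {p : ℝ × ℝ} (h : ∃ c ∈ C, p ∈ c) :
    s(p, partner C p) ∈ C := by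
  rw [partner, dif_pos h, Sym2.other_spec h.choose_spec.2]
  exact h.choose_spec.1

noncomputable def endsF (c : Sym2 (ℝ × ℝ)) : Finset (ℝ × ℝ) := by
  classical exact {c.out.1, c.out.2}

lemma mem_endsF {p : ℝ × ℝ} {c : Sym2 (ℝ × ℝ)} : p ∈ endsF c ↔ p ∈ c := by
  classical
  have hc : s(c.out.1, c.out.2) = c := by
    exact c.out_eq
  constructor
  · intro h
    simp only [endsF, Finset.mem_insert, Finset.mem_singleton] at h
    rcases h with h | h <;> subst h
    · exact Sym2.out_fst_mem c
    · exact Sym2.out_snd_mem c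
  · intro h
    rw [← hc, Sym2.mem_iff] at h
    simp only [endsF, Finset.mem_insert, Finset.mem_singleton]
    exact h

lemma sum_fAng_matching (P : Finset (ℝ × ℝ)) (m : ℝ × ℝ → ℝ × ℝ)
    (hmem : ∀ p ∈ P, m p ∈ P) (hinv : ∀ p ∈ P, m (m p) = p)
    (hcirc : ∀ p ∈ P, p ∈ unitCircle) (hne : ∀ p ∈ P, p ≠ m p) :
    ∑ p ∈ P, fAng p (m p) = Real.pi * P.card := by
  have hrev : ∑ p ∈ P, fAng p (m p) = ∑ p ∈ P, fAng (m p) p :=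
    Finset.sum_nbij' m m hmem hmem hinv hinv
      (fun p hp => by rw [hinv p hp])
  have hsum : ∑ p ∈ P, (fAng p (m p) + fAng (m p) p) = (2 * Real.pi) * P.card := by
    rw [Finset.sum_congr rfl
      (fun p hp => fAng_add_symm (hcirc p hp) (hcirc _ (hmem p hp)) (hne p hp))]
    rw [Finset.sum_const, nsmul_eq_mul, mul_comm]
  rw [Finset.sum_add_distrib, ← hrev] at hsum
  linarith

lemma matching_facts (C : Finset (Sym2 (ℝ × ℝ))) (P : Finset (ℝ × ℝ))
    (hC : ∀ c ∈ C, ¬ c.IsDiag ∧ ∀ p ∈ c, p ∈ unitCircle)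
    (hCdisj : ∀ c ∈ C, ∀ c' ∈ C, c ≠ c' → chordSeg c ∩ chordSeg c' = ∅)
    (hmemP : ∀ p, p ∈ P ↔ ∃ c ∈ C, p ∈ c) :
    (∀ p ∈ P, s(p, partner C p) ∈ C) ∧
    (∀ p ∈ P, ∀ c ∈ C, p ∈ c → c = s(p, partner C p)) ∧
    (∀ p ∈ P, p ≠ partner C p) ∧
    (∀ p ∈ P, partner C p ∈ P) ∧
    (∀ p ∈ P, partner C (partner C p) = p) ∧
    (∀ p ∈ P, p ∈ unitCircle ∧ partner C p ∈ unitCircle) := by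
  have huniq : ∀ c ∈ C, ∀ c' ∈ C, ∀ x : ℝ × ℝ, x ∈ c → x ∈ c' → c = c' := by
    intro c hc c' hc' x hx hx'
    by_contra hne
    have hd := hCdisj c hc c' hc' hne
    have h1 : x ∈ chordSeg c := by
      obtain ⟨y, rfl⟩ := Sym2.mem_iff_exists.mp hx
      rw [chordSeg_mk]
      exact left_mem_segment ℝ x y
    have h2 : x ∈ chordSeg c' := by
      obtain ⟨y, rfl⟩ := Sym2.mem_iff_exists.mp hx'
      rw [chordSeg_mk]
      exact left_mem_segment ℝ x y
    have : x ∈ chordSeg c ∩ chordSeg c' := ⟨h1, h2⟩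
    rw [hd] at this
    exact this
  have hchord : ∀ p ∈ P, s(p, partner C p) ∈ C :=
    fun p hp => partner_chord ((hmemP p).mp hp)
  have huniq' : ∀ p ∈ P, ∀ c ∈ C, p ∈ c → c = s(p, partner C p) :=
    fun p hp c hc hpc =>
      huniq c hc _ (hchord p hp) p hpc (Sym2.mem_mk_left p _)
  have hne : ∀ p ∈ P, p ≠ partner C p := by
    intro p hp h
    have := (hC _ (hchord p hp)).1
    exact this (Sym2.mk_isDiag_iff.mpr h)
  have hmem : ∀ p ∈ P, partner C p ∈ P := by
    intro p hp
    rw [hmemP]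
    exact ⟨s(p, partner C p), hchord p hp, Sym2.mem_mk_right p _⟩
  have hinv : ∀ p ∈ P, partner C (partner C p) = p := by
    intro p hp
    have h1 : s(p, partner C p) = s(partner C p, partner C (partner C p)) :=
      huniq' (partner C p) (hmem p hp) _ (hchord p hp) (Sym2.mem_mk_right p _)
    rw [Sym2.eq_swap (a := p)] at h1
    exact (Sym2.congr_right.mp h1).symm
  have hcirc : ∀ p ∈ P, p ∈ unitCircle ∧ partner C p ∈ unitCircle := by
    intro p hp
    have h := (hC _ (hchord p hp)).2
    exact ⟨h p (Sym2.mem_mk_left p _), h _ (Sym2.mem_mk_right p _)⟩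
  exact ⟨hchord, huniq', hne, hmem, hinv, hcirc⟩

/-- For finite sets `A`, `B` of pairwise disjoint chords of the unit
circle with the same endpoint sets, either `A = B` or there are chords
`a₁, a₂ ∈ A`, `b₁, b₂ ∈ B` sharing endpoints `p₁`, `p₂` such that `b₁` is to the
right of `a₁` at `p₁` and `b₂` is to the left of `a₂` at `p₂`. -/
theorem stmt1 (A B : Finset (Sym2 (ℝ × ℝ)))
    (hA : ∀ c ∈ A, ¬ c.IsDiag ∧ ∀ p ∈ c, p ∈ unitCircle)
    (hB : ∀ c ∈ B, ¬ c.IsDiag ∧ ∀ p ∈ c, p ∈ unitCircle)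
    (hAdisj : ∀ c ∈ A, ∀ c' ∈ A, c ≠ c' → chordSeg c ∩ chordSeg c' = ∅)
    (hBdisj : ∀ c ∈ B, ∀ c' ∈ B, c ≠ c' → chordSeg c ∩ chordSeg c' = ∅)
    (hends : {p : ℝ × ℝ | ∃ c ∈ A, p ∈ c} = {p : ℝ × ℝ | ∃ c ∈ B, p ∈ c}) :
    A = B ∨
      ∃ a₁ ∈ A, ∃ b₁ ∈ B, ∃ a₂ ∈ A, ∃ b₂ ∈ B,
        ∃ p₁ p₂ qa₁ qb₁ qa₂ qb₂ : ℝ × ℝ,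
          p₁ ∈ unitCircle ∧ p₂ ∈ unitCircle ∧
          a₁ = s(p₁, qa₁) ∧ b₁ = s(p₁, qb₁) ∧ p₁ ≠ qa₁ ∧ p₁ ≠ qb₁ ∧
            qa₁ ≠ qb₁ ∧ 0 < det2 (qb₁ - p₁) (qa₁ - p₁) ∧
          a₂ = s(p₂, qa₂) ∧ b₂ = s(p₂, qb₂) ∧ p₂ ≠ qa₂ ∧ p₂ ≠ qb₂ ∧
            qa₂ ≠ qb₂ ∧ det2 (qb₂ - p₂) (qa₂ - p₂) < 0 := by
  classical
  have hEiff : ∀ p : ℝ × ℝ, (∃ c ∈ A, p ∈ c) ↔ (∃ c ∈ B, p ∈ c) :=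
    fun p => Set.ext_iff.mp hends p
  set P : Finset (ℝ × ℝ) := A.biUnion endsF with hPdef
  have hmemPA : ∀ p, p ∈ P ↔ ∃ c ∈ A, p ∈ c := by
    intro p
    simp only [hPdef, Finset.mem_biUnion]
    constructor
    · rintro ⟨c, hc, hpc⟩; exact ⟨c, hc, mem_endsF.mp hpc⟩
    · rintro ⟨c, hc, hpc⟩; exact ⟨c, hc, mem_endsF.mpr hpc⟩
  have hmemPB : ∀ p, p ∈ P ↔ ∃ c ∈ B, p ∈ c :=
    fun p => (hmemPA p).trans (hEiff p)
  obtain ⟨hAchord, hAuniq, hAne, hAmem, hAinv, hAcirc⟩ :=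
    matching_facts A P hA hAdisj hmemPA
  obtain ⟨hBchord, hBuniq, hBne, hBmem, hBinv, hBcirc⟩ :=
    matching_facts B P hB hBdisj hmemPB
  set mA := partner A
  set mB := partner B
  by_cases hsame : ∀ p ∈ P, mA p = mB p
  · left
    ext c
    constructor
    · intro hc
      have hp : c.out.1 ∈ P := (hmemPA _).mpr ⟨c, hc, Sym2.out_fst_mem c⟩
      have h1 : c = s(c.out.1, mA c.out.1) := hAuniq _ hp c hc (Sym2.out_fst_mem c)
      rw [h1, hsame _ hp]
      exact hBchord _ hp
    · intro hc
      have hp : c.out.1 ∈ P := (hmemPB _).mpr ⟨c, hc, Sym2.out_fst_mem c⟩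
      have h1 : c = s(c.out.1, mB c.out.1) := hBuniq _ hp c hc (Sym2.out_fst_mem c)
      rw [h1, ← hsame _ hp]
      exact hAchord _ hp
  · right
    push_neg at hsame
    obtain ⟨p₀, hp₀, hne0⟩ := hsame
    have hsumA : ∑ p ∈ P, fAng p (mA p) = Real.pi * P.card :=
      sum_fAng_matching P mA hAmem hAinv (fun p hp => (hAcirc p hp).1) hAne
    have hsumB : ∑ p ∈ P, fAng p (mB p) = Real.pi * P.card :=
      sum_fAng_matching P mB hBmem hBinv (fun p hp => (hBcirc p hp).1) hBne
    have hfne0 : fAng p₀ (mA p₀) ≠ fAng p₀ (mB p₀) := by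
      intro h
      exact hne0 (fAng_inj (hAcirc p₀ hp₀).1 (hAcirc p₀ hp₀).2 (hBcirc p₀ hp₀).2 h)
    have ex1 : ∃ p ∈ P, fAng p (mB p) < fAng p (mA p) := by
      by_contra hno
      push_neg at hno
      have hlt : ∑ p ∈ P, fAng p (mA p) < ∑ p ∈ P, fAng p (mB p) :=
        Finset.sum_lt_sum hno ⟨p₀, hp₀, lt_of_le_of_ne (hno p₀ hp₀) hfne0⟩
      rw [hsumA, hsumB] at hlt
      exact lt_irrefl _ hlt
    have ex2 : ∃ p ∈ P, fAng p (mA p) < fAng p (mB p) := by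
      by_contra hno
      push_neg at hno
      have hlt : ∑ p ∈ P, fAng p (mB p) < ∑ p ∈ P, fAng p (mA p) :=
        Finset.sum_lt_sum hno ⟨p₀, hp₀, lt_of_le_of_ne (hno p₀ hp₀) (Ne.symm hfne0)⟩
      rw [hsumA, hsumB] at hlt
      exact lt_irrefl _ hlt
    obtain ⟨p₁, hp₁, h1⟩ := ex1
    obtain ⟨p₂, hp₂, h2⟩ := ex2
    refine ⟨s(p₁, mA p₁), hAchord p₁ hp₁, s(p₁, mB p₁), hBchord p₁ hp₁,
      s(p₂, mA p₂), hAchord p₂ hp₂, s(p₂, mB p₂), hBchord p₂ hp₂,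
      p₁, p₂, mA p₁, mB p₁, mA p₂, mB p₂,
      (hAcirc p₁ hp₁).1, (hAcirc p₂ hp₂).1,
      rfl, rfl, hAne p₁ hp₁, hBne p₁ hp₁, ?_, ?_,
      rfl, rfl, hAne p₂ hp₂, hBne p₂ hp₂, ?_, ?_⟩
    · intro h
      rw [h] at h1
      exact lt_irrefl _ h1
    · exact (det_pos_iff (hAcirc p₁ hp₁).1 (hBcirc p₁ hp₁).2 (hAcirc p₁ hp₁).2
        (hBne p₁ hp₁) (hAne p₁ hp₁)).mpr h1
    · intro h
      rw [h] at h2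
      exact lt_irrefl _ h2
    · exact (det_neg_iff (hAcirc p₂ hp₂).1 (hBcirc p₂ hp₂).2 (hAcirc p₂ hp₂).2
        (hBne p₂ hp₂) (hAne p₂ hp₂)).mpr h2
end

section
/- Let T be a tree (a connected acyclic simple graph) on a finite nonempty vertex set V, and let c : V → Bool be a coloring of its vertices. Define v ∼ w if and only if c v = c w and there is a path in T from v to w all of whose vertices have color c v; this is an equivalence relation, and its classes are the maximal monochromatic connected blocks of T. Then there exists an enumeration v₁, …, vₙ of V such that: (1) for every k with 2 ≤ k ≤ n, the vertex v_k is adjacent in T to some v_j with j < k (i.e., the enumeration is a growing order of T), and (2) for every equivalence class C of ∼, the indices {k : v_k ∈ C} form a set of consecutive integers. -/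
def sameBlock {V : Type*} (T : SimpleGraph V) (c : V → Bool) (v w : V) : Prop :=
  c v = c w ∧ ∃ p : T.Walk v w, ∀ u ∈ p.support, c u = c v

section aux
variable {V : Type*} {T : SimpleGraph V} {c : V → Bool}

lemma sameBlock_refl (v : V) : sameBlock T c v v :=
  ⟨rfl, SimpleGraph.Walk.nil, by simp⟩

lemma sameBlock_symm {v w : V} (h : sameBlock T c v w) : sameBlock T c w v := by
  obtain ⟨hc, p, hp⟩ := h
  refine ⟨hc.symm, p.reverse, ?_⟩
  intro u hu
  rw [SimpleGraph.Walk.support_reverse] at hu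
  rw [hp u (List.mem_reverse.mp hu), hc]

lemma sameBlock_trans {u v w : V} (h1 : sameBlock T c u v) (h2 : sameBlock T c v w) :
    sameBlock T c u w := by
  obtain ⟨hc1, p, hp⟩ := h1
  obtain ⟨hc2, q, hq⟩ := h2
  refine ⟨hc1.trans hc2, p.append q, ?_⟩
  intro x hx
  rcases (SimpleGraph.Walk.mem_support_append_iff p q).mp hx with hx | hx
  · exact hp x hx
  · rw [hq x hx, hc1]

lemma sameBlock_of_mem_support [DecidableEq V] {u w x : V} (p : T.Walk u w)
    (hp : ∀ y ∈ p.support, c y = c u) (hx : x ∈ p.support) : sameBlock T c u x :=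
  ⟨(hp x hx).symm, p.takeUntil x hx,
    fun y hy => hp y (SimpleGraph.Walk.support_takeUntil_subset _ _ hy)⟩

lemma exists_crossing {l : List V} : ∀ {u w : V} (p : T.Walk u w), u ∈ l → w ∉ l →
    ∃ a b, a ∈ l ∧ b ∉ l ∧ T.Adj a b ∧ b ∈ p.support := by
  intro u w p
  induction p with
  | nil => intro h1 h2; exact absurd h1 h2
  | @cons u v w h q ih =>
    intro h1 h2
    by_cases hv : v ∈ l
    · obtain ⟨a, b, ha, hb, hab, hbs⟩ := ih hv h2
      exact ⟨a, b, ha, hb, hab, by simp [hbs]⟩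
    · exact ⟨u, v, h1, hv, h, by simp⟩

variable (T c) in
/-- The full invariant of the partial enumeration. -/
structure BInv (l : List V) : Prop where
  ne : l ≠ []
  nodup : l.Nodup
  growing : ∀ i : Fin l.length, 0 < i.1 →
      ∃ j : Fin l.length, j < i ∧ T.Adj (l.get j) (l.get i)
  interval : ∀ i j k : Fin l.length, i ≤ j → j ≤ k →
      sameBlock T c (l.get i) (l.get k) → sameBlock T c (l.get i) (l.get j)
  tail : ∀ (i : Fin l.length) (y : V), y ∉ l → sameBlock T c (l.get i) y →
      ∀ j : Fin l.length, i ≤ j → sameBlock T c (l.get i) (l.get j)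

lemma inv_extend (l : List V) (hl : BInv T c l) (b : V) (hb : b ∉ l)
    (a : V) (ha : a ∈ l) (hab : T.Adj a b)
    (hblock : (∀ x ∈ l, ∀ y, y ∉ l → ¬ sameBlock T c x y) ∨ (∃ u ∈ l, sameBlock T c u b)) :
    BInv T c (l ++ [b]) := by
  classical
  have hlen : (l ++ [b]).length = l.length + 1 := by simp
  have hget_lt : ∀ (i : Fin (l ++ [b]).length) (h : i.1 < l.length),
      (l ++ [b]).get i = l.get ⟨i.1, h⟩ := by
    intro i h
    simp [List.getElem_append_left h]
  have hget_last : ∀ (i : Fin (l ++ [b]).length), i.1 = l.length → (l ++ [b]).get i = b := by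
    intro i h
    simp [List.get_eq_getElem, h]
  -- key fact in the "partial block" case: b is in the block of every partial vertex
  have key : ∀ (i : Fin l.length), sameBlock T c (l.get i) b →
      ∀ j : Fin l.length, i ≤ j → sameBlock T c (l.get i) (l.get j) := by
    intro i hib j hij
    exact hl.tail i b hb hib j hij
  constructor
  · simp
  · rw [List.nodup_append]
    refine ⟨hl.nodup, List.nodup_singleton b, ?_⟩
    intro x hx y hxb hxy
    simp only [List.mem_singleton] at hxb
    exact hb (hxb ▸ hxy ▸ hx)
  · -- growing
    intro i hi
    by_cases h : i.1 < l.length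
    · obtain ⟨j, hji, hadj⟩ := hl.growing ⟨i.1, h⟩ hi
      have hj2 : j.1 < l.length := j.2
      refine ⟨⟨j.1, by simp only [hlen]; omega⟩, hji, ?_⟩
      rw [hget_lt _ hj2, hget_lt i h]
      exact hadj
    · have hi' : i.1 = l.length := by have h1 := i.2; simp at h1; omega
      obtain ⟨ja, hja⟩ := List.mem_iff_get.mp ha
      have hja2 : ja.1 < l.length := ja.2
      refine ⟨⟨ja.1, by simp only [hlen]; omega⟩, ?_, ?_⟩
      · show ja.1 < i.1
        omega
      · rw [hget_lt _ hja2, hget_last i hi']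
        exact hja.symm ▸ hab
  · -- interval
    intro i j k hij hjk hik
    by_cases hk : k.1 < l.length
    · have hjlt : j.1 < l.length := by omega
      have hilt : i.1 < l.length := by omega
      rw [hget_lt i hilt, hget_lt j hjlt]
      rw [hget_lt i hilt, hget_lt k hk] at hik
      exact hl.interval _ _ _ hij hjk hik
    · have hk' : k.1 = l.length := by have h1 := k.2; simp at h1; omega
      by_cases hj : j.1 < l.length
      · have hilt : i.1 < l.length := by omega
        rw [hget_lt i hilt, hget_lt j hj]
        rw [hget_lt i hilt, hget_last k hk'] at hik
        exact key ⟨i.1, hilt⟩ hik ⟨j.1, hj⟩ hij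
      · have hj' : j.1 = l.length := by have h1 := j.2; simp at h1; omega
        have : j = k := Fin.ext (hj'.trans hk'.symm)
        exact this ▸ hik
  · -- tail
    intro i y hy hiy j hij
    by_cases hi : i.1 < l.length
    · have hyl : y ∉ l := fun h => hy (by simp [h])
      have hyb : y ≠ b := fun h => hy (by simp [h])
      rw [hget_lt i hi] at hiy ⊢
      by_cases hj : j.1 < l.length
      · rw [hget_lt j hj]
        exact hl.tail ⟨i.1, hi⟩ y hyl hiy ⟨j.1, hj⟩ hij
      · have hj' : j.1 = l.length := by have h1 := j.2; simp at h1; omega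
        rw [hget_last j hj']
        -- need : sameBlock (l.get i) b
        rcases hblock with hB | ⟨u, hu, hub⟩
        · exact absurd hiy (hB _ (List.get_mem l ⟨i.1, hi⟩) y hyl)
        · -- block of l.get i = block of u via the last element of l
          have hlpos : 0 < l.length := List.length_pos_iff.mpr hl.ne
          set z : Fin l.length := ⟨l.length - 1, by omega⟩
          obtain ⟨iu, hiu⟩ := List.mem_iff_get.mp hu
          have hiu2 : iu.1 < l.length := iu.2
          have h1 : sameBlock T c (l.get ⟨i.1, hi⟩) (l.get z) :=
            hl.tail ⟨i.1, hi⟩ y hyl hiy z (by show i.1 ≤ l.length - 1; omega)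
          have h2 : sameBlock T c (l.get iu) (l.get z) :=
            hl.tail iu b hb (hiu ▸ hub) z (by show iu.1 ≤ l.length - 1; omega)
          exact sameBlock_trans (sameBlock_trans h1 (sameBlock_symm h2)) (hiu ▸ hub)
    · have hi' : i.1 = l.length := by have h1 := i.2; simp at h1; omega
      have hj' : j = i := Fin.ext (by have h1 := j.2; simp at h1; omega)
      exact hj' ▸ sameBlock_refl _

lemma inv_grow [Fintype V] (hT : T.Connected) :
    ∀ (m : ℕ) (l : List V), BInv T c l → l.length + m = Fintype.card V →
    ∃ L : List V, BInv T c L ∧ L.length = Fintype.card V := by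
  classical
  intro m
  induction m with
  | zero => intro l hl hlen; exact ⟨l, hl, by omega⟩
  | succ m ih =>
    intro l hl hlen
    -- there is a vertex not in l
    have hexists : ∃ x, x ∉ l := by
      by_contra h
      push_neg at h
      have : Finset.univ ⊆ l.toFinset := fun x _ => List.mem_toFinset.mpr (h x)
      have := Finset.card_le_card this
      have := l.toFinset_card_le
      simp [Finset.card_univ] at *
      omega
    by_cases hpart : ∃ u ∈ l, ∃ y, y ∉ l ∧ sameBlock T c u y
    · obtain ⟨u, hu, y, hy, huy⟩ := hpart
      obtain ⟨hcuy, p, hp⟩ := huy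
      obtain ⟨a, b, ha, hb, hab, hbs⟩ := exists_crossing p hu hy
      have hub : sameBlock T c u b := sameBlock_of_mem_support p hp hbs
      have hInv := inv_extend l hl b hb a ha hab (Or.inr ⟨u, hu, hub⟩)
      exact ih (l ++ [b]) hInv (by simp; omega)
    · push_neg at hpart
      obtain ⟨x0, hx0⟩ := hexists
      have hu0 : l.get ⟨0, List.length_pos_iff.mpr hl.ne⟩ ∈ l :=
        List.get_mem l ⟨0, List.length_pos_iff.mpr hl.ne⟩
      obtain ⟨p⟩ := hT.preconnected (l.get ⟨0, List.length_pos_iff.mpr hl.ne⟩) x0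
      obtain ⟨a, b, ha, hb, hab, hbs⟩ := exists_crossing p hu0 hx0
      have hInv := inv_extend l hl b hb a ha hab
        (Or.inl (fun x hx y hy hxy => hpart x hx y hy hxy))
      exact ih (l ++ [b]) hInv (by simp; omega)

end aux

/-- `sameBlock` is an equivalence relation, and every tree with a
`Bool`-coloring of its vertices admits a growing order (each vertex after the
first is adjacent to an earlier one) in which every maximal monochromatic
connected block occupies a set of consecutive indices. -/
theorem stmt3 {V : Type*} [Fintype V] [Nonempty V]
    (T : SimpleGraph V) (hT : T.IsTree) (c : V → Bool) :
    Equivalence (sameBlock T c) ∧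
    ∃ e : Fin (Fintype.card V) ≃ V,
      (∀ k : Fin (Fintype.card V), 0 < (k : ℕ) →
        ∃ j : Fin (Fintype.card V), (j : ℕ) < (k : ℕ) ∧ T.Adj (e j) (e k)) ∧
      (∀ j k l : Fin (Fintype.card V), j ≤ k → k ≤ l →
        sameBlock T c (e j) (e l) → sameBlock T c (e j) (e k)) := by
  classical
  refine ⟨⟨sameBlock_refl, sameBlock_symm, sameBlock_trans⟩, ?_⟩
  have hcard : 0 < Fintype.card V := Fintype.card_pos
  set v0 : V := Classical.arbitrary V
  have hInv0 : BInv T c [v0] := by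
    constructor
    · simp
    · simp
    · intro i hi
      have h1 : i.1 < 1 := i.2
      omega
    · intro i j k _ _ _
      have : i = j := Fin.ext (by have h1 : i.1 < 1 := i.2; have h2 : j.1 < 1 := j.2; omega)
      exact this ▸ sameBlock_refl _
    · intro i y _ _ j _
      have : i = j := Fin.ext (by have h1 : i.1 < 1 := i.2; have h2 : j.1 < 1 := j.2; omega)
      exact this ▸ sameBlock_refl _
  obtain ⟨L, hL, hLlen⟩ := inv_grow hT.isConnected (Fintype.card V - 1) [v0] hInv0 (by simp; omega)
  have hinj : Function.Injective (fun k : Fin (Fintype.card V) => L.get (Fin.cast hLlen.symm k)) := by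
    intro i j hij
    have h1 := (hL.nodup.get_inj_iff).mp hij
    have h2 := congrArg Fin.val h1
    exact Fin.ext h2
  have hbij := (Fintype.bijective_iff_injective_and_card _).mpr ⟨hinj, by simp⟩
  refine ⟨Equiv.ofBijective _ hbij, ?_, ?_⟩
  · intro k hk
    obtain ⟨j, hji, hadj⟩ := hL.growing (Fin.cast hLlen.symm k) hk
    exact ⟨Fin.cast hLlen j, hji, hadj⟩
  · intro j k l hjk hkl h
    exact hL.interval (Fin.cast hLlen.symm j) (Fin.cast hLlen.symm k) (Fin.cast hLlen.symm l)
      hjk hkl h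
end

section
/- Let T be a tree (a connected acyclic simple graph) on a finite nonempty vertex set V, and let c : V → Bool be a coloring of its vertices. Define v ∼ w if and only if c v = c w and there is a path in T from v to w all of whose vertices have color c v; this is an equivalence relation whose classes are the maximal monochromatic connected blocks of T. Define a simple graph B on the quotient V/∼ by declaring two distinct classes [u] and [w] adjacent if and only if some vertex of [u] is adjacent in T to some vertex of [w]. Then B is a tree, and any two adjacent vertices of B have different colors (where the color of a class is the common color of its elements); in particular, B is bipartite. -/
/-- The block graph `B`: vertices are the maximal monochromatic connected
blocks of `(T, c)`, and two distinct blocks are adjacent iff some vertex of one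
is adjacent in `T` to some vertex of the other. -/
def blockGraph {V : Type*} (T : SimpleGraph V) (c : V → Bool) :
    SimpleGraph (Quot (sameBlock T c)) where
  Adj x y := x ≠ y ∧ ∃ u w : V,
    Quot.mk (sameBlock T c) u = x ∧ Quot.mk (sameBlock T c) w = y ∧ T.Adj u w
  symm := by
    constructor
    rintro x y ⟨hne, u, w, hu, hw, hadj⟩
    exact ⟨hne.symm, w, u, hw, hu, hadj.symm⟩
  loopless := by
    constructor
    rintro x ⟨hne, -⟩
    exact hne rfl

namespace BlockAux

open SimpleGraph

variable {V : Type*} {T : SimpleGraph V} {c : V → Bool}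

lemma sameBlock_equiv (T : SimpleGraph V) (c : V → Bool) : Equivalence (sameBlock T c) := by
  constructor
  · intro v; exact ⟨rfl, Walk.nil, by simp⟩
  · rintro v w ⟨hc, p, hp⟩
    exact ⟨hc.symm, p.reverse, fun u hu => (hp u (by simpa using hu)).trans hc⟩
  · rintro u v w ⟨hc1, p, hp⟩ ⟨hc2, q, hq⟩
    refine ⟨hc1.trans hc2, p.append q, fun x hx => ?_⟩
    rcases (Walk.mem_support_append_iff p q).mp hx with h | h
    · exact hp x h
    · exact (hq x h).trans hc1.symm

lemma mk_eq_iff {v w : V} :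
    Quot.mk (sameBlock T c) v = Quot.mk (sameBlock T c) w ↔ sameBlock T c v w := by
  rw [Quot.eq]
  exact (sameBlock_equiv T c).eqvGen_iff

lemma reach_mk {v w : V} (p : T.Walk v w) :
    (blockGraph T c).Reachable (Quot.mk _ v) (Quot.mk _ w) := by
  induction p with
  | nil => exact Reachable.refl _
  | @cons a b d h q ih =>
    by_cases he : Quot.mk (sameBlock T c) a = Quot.mk (sameBlock T c) b
    · rw [he]; exact ih
    · have hadj : (blockGraph T c).Adj (Quot.mk _ a) (Quot.mk _ b) := ⟨he, a, b, rfl, rfl, h⟩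
      exact hadj.reachable.trans ih

end BlockAux

namespace BlockAux

open SimpleGraph

variable {V : Type*} {T : SimpleGraph V} {c : V → Bool}


lemma adj_colors_ne (hT : T.IsAcyclic) {x y : Quot (sameBlock T c)}
    (h : (blockGraph T c).Adj x y) :
    ∀ u w : V, Quot.mk (sameBlock T c) u = x → Quot.mk (sameBlock T c) w = y → c u ≠ c w := by
  obtain ⟨hne, u', w', hu', hw', hadj⟩ := h
  have hcc : c u' ≠ c w' := by
    intro hcE
    apply hne
    rw [← hu', ← hw']
    exact Quot.sound ⟨hcE, Walk.cons hadj Walk.nil, by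
      intro z hz
      simp only [Walk.support_cons, Walk.support_nil, List.mem_cons, List.mem_singleton] at hz
      rcases hz with rfl | rfl | h; · rfl
      · exact hcE.symm
      · cases h⟩
  intro u w hu hw hcuw
  have h1 : sameBlock T c u u' := mk_eq_iff.mp (hu.trans hu'.symm)
  have h2 : sameBlock T c w w' := mk_eq_iff.mp (hw.trans hw'.symm)
  exact hcc (h1.1.symm.trans (hcuw.symm ▸ h2.1))

lemma walk_pred {W : Type*} {G : SimpleGraph W} {P : W → Prop}
    (hP : ∀ a b, G.Adj a b → (P a ↔ P b)) {x y : W} (p : G.Walk x y) : P x ↔ P y := by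
  induction p with
  | nil => rfl
  | cons h q ih => exact (hP _ _ h).trans ih

lemma bridge (hT : T.IsAcyclic) {x y : Quot (sameBlock T c)}
    (hadj : (blockGraph T c).Adj x y) : (blockGraph T c).IsBridge s(x, y) := by
  obtain ⟨hne, u, w, hu, hw, huw⟩ := hadj
  have hcuw : c u ≠ c w :=
    adj_colors_ne hT ⟨hne, u, w, hu, hw, huw⟩ u w hu hw
  have hbr : T.IsBridge s(u, w) := (isAcyclic_iff_forall_adj_isBridge.mp hT) huw
  have hnr : ¬(T \ fromEdgeSet {s(u, w)}).Reachable u w := isBridge_iff.mp hbr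
  set S : V → Prop := fun v => (T.deleteEdges {s(u, w)}).Reachable u v with hS
  have claimA : ∀ a b, sameBlock T c a b → (S a ↔ S b) := by
    rintro a b ⟨hc, p, hp⟩
    have hpe : ∀ e ∈ p.edges, e ∉ ({s(u, w)} : Set (Sym2 V)) := by
      intro e he hmem
      rw [Set.mem_singleton_iff] at hmem
      subst hmem
      have h1 := hp u (Walk.fst_mem_support_of_mem_edges p he)
      have h2 := hp w (Walk.snd_mem_support_of_mem_edges p he)
      exact hcuw (h1.trans h2.symm)
    have p' := p.toDeleteEdges {s(u, w)} hpe
    exact ⟨fun h => h.trans p'.reachable, fun h => h.trans p'.reverse.reachable⟩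
  have claimB : ∀ a b, T.Adj a b → s(a, b) ≠ s(u, w) → (S a ↔ S b) := by
    intro a b hab hne'
    have : (T.deleteEdges {s(u, w)}).Adj a b := by simp [hab, hne']
    exact ⟨fun h => h.trans this.reachable, fun h => h.trans this.symm.reachable⟩
  set SB : Quot (sameBlock T c) → Prop :=
    Quot.lift S (fun a b h => propext (claimA a b h)) with hSB
  rw [isBridge_iff]
  refine fun hre => ?_
  have hinv : ∀ a b, ((blockGraph T c) \ fromEdgeSet {s(x, y)}).Adj a b → (SB a ↔ SB b) := by
    rintro a b ⟨⟨hne1, u', w', hu', hw', hadj'⟩, hne2⟩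
    simp only [fromEdgeSet_adj, Set.mem_singleton_iff, not_and] at hne2
    by_cases hcase : s(u', w') = s(u, w)
    · exfalso
      rcases Sym2.eq_iff.mp hcase with ⟨rfl, rfl⟩ | ⟨rfl, rfl⟩
      · exact hne2 (by rw [← hu', ← hw', ← hu, ← hw]) hne1
      · exact hne2 (by rw [← hu', ← hw', ← hu, ← hw, Sym2.eq_swap]) hne1
    · have := claimB u' w' hadj' hcase
      rw [← hu', ← hw']
      exact this
  obtain ⟨p⟩ := hre
  have := walk_pred hinv p
  rw [← hu, ← hw] at this
  have hSu : S u := Reachable.refl u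
  exact hnr (this.mp hSu)

end BlockAux


/-- for a tree `T` on a finite nonempty vertex set with a
`Bool`-coloring `c`, the block graph is a tree, adjacent blocks have different
colors, and in particular the block graph is bipartite (2-colorable). -/
theorem stmt4 {V : Type*} [Fintype V] [Nonempty V]
    (T : SimpleGraph V) (hT : T.IsTree) (c : V → Bool) :
    (blockGraph T c).IsTree ∧
    (∀ x y : Quot (sameBlock T c), (blockGraph T c).Adj x y →
      ∀ u w : V, Quot.mk (sameBlock T c) u = x →
        Quot.mk (sameBlock T c) w = y → c u ≠ c w) ∧
    (blockGraph T c).Colorable 2 := by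
  have part2 : ∀ x y, (blockGraph T c).Adj x y → ∀ u w : V,
      Quot.mk (sameBlock T c) u = x → Quot.mk (sameBlock T c) w = y → c u ≠ c w :=
    fun x y h => BlockAux.adj_colors_ne hT.IsAcyclic h
  refine ⟨⟨?_, ?_⟩, part2, ?_⟩
  · have hne : Nonempty (Quot (sameBlock T c)) := ⟨Quot.mk _ (Classical.arbitrary V)⟩
    refine SimpleGraph.Connected.mk ?_
    intro x y
    obtain ⟨v, rfl⟩ := Quot.exists_rep x
    obtain ⟨w, rfl⟩ := Quot.exists_rep y
    exact (hT.isConnected.preconnected v w).elim fun p => BlockAux.reach_mk p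
  · exact SimpleGraph.isAcyclic_iff_forall_adj_isBridge.mpr
      fun _ _ h => BlockAux.bridge hT.IsAcyclic h
  · refine ⟨SimpleGraph.Coloring.mk
      (fun x => if Quot.lift c (fun a b h => h.1) x then 0 else 1) ?_⟩
    intro x y h
    obtain ⟨u, rfl⟩ := Quot.exists_rep x
    obtain ⟨w, rfl⟩ := Quot.exists_rep y
    have hne := part2 _ _ h u w rfl rfl
    cases hu : c u <;> cases hw : c w <;> simp_all
end
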